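/- Fix λ_i ∈ [0,1) for each of n qubits and let λ = max_i λ_i. Let k ≥ 0 and let O be an n-qubit operator lying in S_k, the span of the dual Wauli operators Q̃_α with |α| ≤ k. Then the operator norm of O is bounded by ‖O‖_∞ ≤ (1+λ)^k · ‖O‖_{Q1}. -/

import Mathlib

set_option synthInstance.maxHeartbeats 1000000
set_option maxHeartbeats 1000000

namespace SSP

noncomputable section

open Matrix
open scoped ComplexOrder

/-- Computational basis labels for `n` qubits. -/
abbrev Idx (n : ℕ) := Fin n → Fin 2

/-- Operators (matrices) on the Hilbert space of `n` qubits. -/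
abbrev Op (n : ℕ) := Matrix (Idx n) (Idx n) ℂ

/-- Super-operators on `n` qubits. -/
abbrev SOp (n : ℕ) := Op n →ₗ[ℂ] Op n

/-- The operator norm (largest singular value) of a complex matrix. -/
noncomputable def opNorm {m : Type*} [Fintype m] [DecidableEq m]
    (M : Matrix m m ℂ) : ℝ :=
  ‖Matrix.toEuclideanCLM (𝕜 := ℂ) M‖

/-- A density matrix: positive semidefinite with unit trace. -/
def IsDensity {n : ℕ} (ρ : Op n) : Prop := ρ.PosSemidef ∧ ρ.trace = 1

/-- An operator is supported on the set `S` of qubits if it has the form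
`Ô_S ⊗ 1` on the remaining qubits. -/
def SupportedOn {n : ℕ} (S : Set (Fin n)) (M : Op n) : Prop :=
  (∀ x y : Idx n, (∃ i ∉ S, x i ≠ y i) → M x y = 0) ∧
  (∀ x y x' y' : Idx n,
      (∀ i ∈ S, x i = x' i) → (∀ i ∈ S, y i = y' i) →
      (∀ i ∉ S, x i = y i) → (∀ i ∉ S, x' i = y' i) → M x y = M x' y')

/-- The support of an operator: the smallest set of qubits supporting it
(the intersection of all supporting sets). -/
def suppOp {n : ℕ} (M : Op n) : Set (Fin n) :=
  {i | ∀ S : Set (Fin n), SupportedOn S M → i ∈ S}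

/-- `E` is a quantum channel (CPTP map) acting only on the qubits in `S`:
it has a Kraus representation whose Kraus operators are all supported on `S`. -/
def IsChannelOn {n : ℕ} (S : Set (Fin n)) (E : SOp n) : Prop :=
  ∃ (m : ℕ) (F : Fin m → Op n),
    (∀ j, SupportedOn S (F j)) ∧
    (∑ j, (F j)ᴴ * F j = 1) ∧
    (∀ ρ, E ρ = ∑ j, F j * ρ * (F j)ᴴ)

/-- A quantum channel on the whole system. -/
def IsChannel {n : ℕ} (E : SOp n) : Prop := IsChannelOn Set.univ E

/-- `Estar` is the adjoint of `E` with respect to the Hilbert–Schmidt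
inner product `⟨A,B⟩ = Tr(A†B)`. -/
def IsHSAdjoint {n : ℕ} (E Estar : SOp n) : Prop :=
  ∀ A B : Op n, ((Estar A)ᴴ * B).trace = (Aᴴ * (E B)).trace

/-- An ergodic channel: it has a unique fixed point among density matrices,
this fixed point is full rank (positive definite), and there is no other
eigenvalue of modulus one. -/
def IsErgodic {n : ℕ} (E : SOp n) : Prop :=
  (∃ σ : Op n, IsDensity σ ∧ σ.PosDef ∧ E σ = σ ∧
      ∀ ρ : Op n, IsDensity ρ → E ρ = ρ → ρ = σ) ∧
  (∀ μ : ℂ, Module.End.HasEigenvalue (E : Module.End ℂ (Op n)) μ → μ = 1 ∨ ‖μ‖ < 1)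

/-- The set of qubits (endpoints) of an edge. -/
def edgeQubits {n : ℕ} (e : Sym2 (Fin n)) : Set (Fin n) := {i | i ∈ e}

/-- Finset of endpoints of an edge. -/
def edgeFinset' {n : ℕ} (e : Sym2 (Fin n)) : Finset (Fin n) :=
  Finset.univ.filter (· ∈ e)

/-- A Hamiltonian is geometrically `k`-local w.r.t. the graph `G`: it is a sum
of Hermitian terms, each supported on a connected subset of `G` with at most
`k` vertices. -/
def GeomLocal {n : ℕ} (G : SimpleGraph (Fin n)) (k : ℕ) (H : Op n) : Prop :=
  ∃ (m : ℕ) (h : Fin m → Op n) (S : Fin m → Set (Fin n)),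
    H = ∑ j, h j ∧
    ∀ j, (h j).IsHermitian ∧ SupportedOn (S j) (h j) ∧
      (S j).ncard ≤ k ∧ (G.induce (S j)).Preconnected

/-- The ball of radius `k` around a set of vertices, in the graph metric. -/
def Ball {n : ℕ} (G : SimpleGraph (Fin n)) (X : Set (Fin n)) (k : ℕ) :
    Set (Fin n) :=
  {v | ∃ u ∈ X, ∃ w : G.Walk u v, w.length ≤ k}

/- Pauli matrices and the Wauli bases. -/
def PX : Matrix (Fin 2) (Fin 2) ℂ := !![0, 1; 1, 0]
def PY : Matrix (Fin 2) (Fin 2) ℂ := !![0, -Complex.I; Complex.I, 0]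
def PZ : Matrix (Fin 2) (Fin 2) ℂ := !![1, 0; 0, -1]

/-- `W = (1/2)(1 + λ Z)`. -/
noncomputable def Wmat (l : ℝ) : Matrix (Fin 2) (Fin 2) ℂ :=
  (2⁻¹ : ℂ) • (1 + (l : ℂ) • PZ)

/-- Single-qubit Wauli basis `{W, X/2, Y/2, Z/2}`. -/
noncomputable def wauli (l : ℝ) : Fin 4 → Matrix (Fin 2) (Fin 2) ℂ :=
  ![Wmat l, (2⁻¹ : ℂ) • PX, (2⁻¹ : ℂ) • PY, (2⁻¹ : ℂ) • PZ]

/-- Single-qubit dual Wauli basis `{1, X, Y, Z - λ·1}`. -/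
noncomputable def dualWauli (l : ℝ) : Fin 4 → Matrix (Fin 2) (Fin 2) ℂ :=
  ![1, PX, PY, PZ - (l : ℂ) • 1]

/-- The `n`-qubit Wauli basis element `Q_α` (tensor product of the `Q_{α_i}`). -/
noncomputable def Qmat {n : ℕ} (lam : Fin n → ℝ) (α : Fin n → Fin 4) : Op n :=
  Matrix.of fun x y => ∏ i, wauli (lam i) (α i) (x i) (y i)

/-- The `n`-qubit dual Wauli basis element `Q̃_α`. -/
noncomputable def Qdual {n : ℕ} (lam : Fin n → ℝ) (α : Fin n → Fin 4) : Op n :=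
  Matrix.of fun x y => ∏ i, dualWauli (lam i) (α i) (x i) (y i)

/-- The support of a Wauli string. -/
def suppStr {n : ℕ} (α : Fin n → Fin 4) : Finset (Fin n) :=
  Finset.univ.filter (fun i => α i ≠ 0)

/-- The coefficient `c_α = Tr(Q_α O)` of the expansion `O = ∑_α c_α Q̃_α`
in the dual Wauli basis. -/
noncomputable def QCoeff {n : ℕ} (lam : Fin n → ℝ) (O : Op n)
    (α : Fin n → Fin 4) : ℂ :=
  (Qmat lam α * O).trace

/-- The `Q1` norm: the `ℓ¹` norm of the dual-Wauli coefficient vector. -/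
noncomputable def Q1Norm {n : ℕ} (lam : Fin n → ℝ) (O : Op n) : ℝ :=
  ∑ α : Fin n → Fin 4, ‖QCoeff lam O α‖

/-- The subspace `S_k`: the span of the dual Wauli operators `Q̃_α` with
`|α| ≤ k`. -/
def Sk {n : ℕ} (lam : Fin n → ℝ) (k : ℕ) : Submodule ℂ (Op n) :=
  Submodule.span ℂ {Q | ∃ α : Fin n → Fin 4, (suppStr α).card ≤ k ∧ Q = Qdual lam α}

/-- The trace norm `Tr √(O†O)` of a matrix. -/
noncomputable def traceNorm {m : Type*} [Fintype m] [DecidableEq m]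
    (M : Matrix m m ℂ) : ℝ :=
  (((Matrix.posSemidef_conjTranspose_mul_self M).1.eigenvectorUnitary : Matrix m m ℂ) *
      diagonal (fun i => ((Real.sqrt ∘ (Matrix.posSemidef_conjTranspose_mul_self M).1.eigenvalues) i : ℂ)) *
      (star ((Matrix.posSemidef_conjTranspose_mul_self M).1.eigenvectorUnitary : Matrix m m ℂ))).trace.re



/-! ### Auxiliary lemmas for Statement 7 -/

/-- Schur test: operator norm bounded by common row/column absolute sum bound. -/
lemma schur_opNorm_le {m : Type*} [Fintype m] [DecidableEq m]
    (M : Matrix m m ℂ) (r : ℝ) (hr : 0 ≤ r)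
    (hrow : ∀ i, ∑ j, ‖M i j‖ ≤ r) (hcol : ∀ j, ∑ i, ‖M i j‖ ≤ r) :
    opNorm M ≤ r := by
  apply ContinuousLinearMap.opNorm_le_bound _ hr
  intro x
  have hx : ∀ v : EuclideanSpace ℂ m, ‖v‖ = Real.sqrt (∑ i, ‖v i‖ ^ 2) := by
    intro v; exact EuclideanSpace.norm_eq v
  have key : ∑ i, ‖(toEuclideanCLM (𝕜 := ℂ) M x) i‖ ^ 2 ≤ r ^ 2 * ∑ j, ‖x j‖ ^ 2 := by
    have happ : ∀ i, (toEuclideanCLM (𝕜 := ℂ) M x) i = ∑ j, M i j * x j := by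
      intro i
      have h0 := Matrix.ofLp_toEuclideanCLM (𝕜 := ℂ) M x
      have h2 : (WithLp.ofLp (toEuclideanCLM (𝕜 := ℂ) M x)) i
          = (M *ᵥ WithLp.ofLp x) i := by
        rw [h0]
      simpa [Matrix.mulVec, dotProduct] using h2
    calc ∑ i, ‖(toEuclideanCLM (𝕜 := ℂ) M x) i‖ ^ 2
        ≤ ∑ i, r * ∑ j, ‖M i j‖ * ‖x j‖ ^ 2 := by
          refine Finset.sum_le_sum fun i _ => ?_
          have h1 : ‖(toEuclideanCLM (𝕜 := ℂ) M x) i‖ ≤ ∑ j, ‖M i j‖ * ‖x j‖ := by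
            rw [happ i]
            refine (norm_sum_le _ _).trans_eq ?_
            exact Finset.sum_congr rfl (by simp)
          have h2 : (∑ j, ‖M i j‖ * ‖x j‖) ^ 2 ≤
              (∑ j, ‖M i j‖) * ∑ j, ‖M i j‖ * ‖x j‖ ^ 2 :=
            Finset.sum_sq_le_sum_mul_sum_of_sq_eq_mul _ (fun j _ => norm_nonneg _)
              (fun j _ => mul_nonneg (norm_nonneg _) (sq_nonneg _)) (fun j _ => by ring)
          calc ‖(toEuclideanCLM (𝕜 := ℂ) M x) i‖ ^ 2 ≤ (∑ j, ‖M i j‖ * ‖x j‖) ^ 2 :=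
                pow_le_pow_left₀ (norm_nonneg _) h1 2
            _ ≤ (∑ j, ‖M i j‖) * ∑ j, ‖M i j‖ * ‖x j‖ ^ 2 := h2
            _ ≤ r * ∑ j, ‖M i j‖ * ‖x j‖ ^ 2 :=
                mul_le_mul_of_nonneg_right (hrow i)
                  (Finset.sum_nonneg fun j _ => mul_nonneg (norm_nonneg _) (sq_nonneg _))
      _ = r * ∑ j, (∑ i, ‖M i j‖) * ‖x j‖ ^ 2 := by
          rw [← Finset.mul_sum, Finset.sum_comm]
          congr 1; exact Finset.sum_congr rfl fun j _ => by rw [Finset.sum_mul]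
      _ ≤ r * ∑ j, r * ‖x j‖ ^ 2 := by
          refine mul_le_mul_of_nonneg_left (Finset.sum_le_sum fun j _ => ?_) hr
          exact mul_le_mul_of_nonneg_right (hcol j) (sq_nonneg _)
      _ = r ^ 2 * ∑ j, ‖x j‖ ^ 2 := by rw [← Finset.mul_sum]; ring
  show ‖(toEuclideanCLM (𝕜 := ℂ) M) x‖ ≤ r * ‖x‖
  rw [hx, hx]
  calc Real.sqrt (∑ i, ‖(toEuclideanCLM (𝕜 := ℂ) M x) i‖ ^ 2)
      ≤ Real.sqrt (r ^ 2 * ∑ j, ‖x j‖ ^ 2) := Real.sqrt_le_sqrt key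
    _ = r * Real.sqrt (∑ j, ‖x j‖ ^ 2) := by
        rw [Real.sqrt_mul (sq_nonneg r), Real.sqrt_sq hr]

/-- Single-qubit duality of the Wauli bases. -/
lemma wauli_dual_pairing (l : ℝ) (s t : Fin 4) :
    ∑ a : Fin 2, ∑ b : Fin 2, wauli l s a b * dualWauli l t b a
      = if s = t then 1 else 0 := by
  fin_cases s <;> fin_cases t <;>
    simp [wauli, dualWauli, Wmat, PX, PY, PZ, Fin.sum_univ_two, Matrix.one_apply,
      Matrix.smul_apply, Matrix.add_apply, Matrix.sub_apply] <;> ring_nf <;>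
    simp [Complex.ext_iff]

/-- Factorization of a double sum of products over product index functions. -/
lemma double_sum_prod {n : ℕ} (f : Fin n → Fin 2 → Fin 2 → ℂ) :
    ∑ x : Idx n, ∑ y : Idx n, ∏ i, f i (x i) (y i)
      = ∏ i, ∑ a : Fin 2, ∑ b : Fin 2, f i a b := by
  rw [show (∏ i, ∑ a : Fin 2, ∑ b : Fin 2, f i a b)
      = ∏ i, ∑ c : Fin 2 × Fin 2, f i c.1 c.2 by
    refine Finset.prod_congr rfl fun i _ => ?_
    rw [Fintype.sum_prod_type]]
  rw [Fintype.prod_sum]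
  rw [← Fintype.sum_prod_type']
  exact Fintype.sum_equiv (Equiv.arrowProdEquivProdArrow (Fin n) (fun _ => Fin 2) (fun _ => Fin 2)).symm _ _
    (fun p => rfl)

/-- Trace duality of the `n`-qubit Wauli bases. -/
lemma trace_Qmat_mul_Qdual {n : ℕ} (lam : Fin n → ℝ) (α β : Fin n → Fin 4) :
    (Qmat lam α * Qdual lam β).trace = if α = β then 1 else 0 := by
  have : (Qmat lam α * Qdual lam β).trace
      = ∑ x : Idx n, ∑ y : Idx n,
          ∏ i, (wauli (lam i) (α i) (x i) (y i) * dualWauli (lam i) (β i) (y i) (x i)) := by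
    simp only [Matrix.trace, Matrix.diag, Matrix.mul_apply, Qmat, Qdual, Matrix.of_apply]
    exact Finset.sum_congr rfl fun x _ => Finset.sum_congr rfl fun y _ =>
      (Finset.prod_mul_distrib).symm
  rw [this, double_sum_prod
    (fun i a b => wauli (lam i) (α i) a b * dualWauli (lam i) (β i) b a)]
  have hfac : ∀ i : Fin n,
      (∑ a : Fin 2, ∑ b : Fin 2,
        wauli (lam i) (α i) a b * dualWauli (lam i) (β i) b a)
      = if α i = β i then 1 else 0 := fun i => wauli_dual_pairing (lam i) (α i) (β i)
  rw [Finset.prod_congr rfl fun i _ => hfac i]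
  by_cases h : α = β
  · subst h; simp
  · obtain ⟨i, hi⟩ := Function.ne_iff.mp h
    rw [if_neg h]
    exact Finset.prod_eq_zero (Finset.mem_univ i) (by simp [hi])

lemma QCoeff_Qdual {n : ℕ} (lam : Fin n → ℝ) (α β : Fin n → Fin 4) :
    QCoeff lam (Qdual lam β) α = if α = β then 1 else 0 :=
  trace_Qmat_mul_Qdual lam α β

lemma QCoeff_add {n : ℕ} (lam : Fin n → ℝ) (A B : Op n) (α : Fin n → Fin 4) :
    QCoeff lam (A + B) α = QCoeff lam A α + QCoeff lam B α := by
  simp [QCoeff, Matrix.mul_add]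

lemma QCoeff_smul {n : ℕ} (lam : Fin n → ℝ) (c : ℂ) (A : Op n) (α : Fin n → Fin 4) :
    QCoeff lam (c • A) α = c * QCoeff lam A α := by
  simp [QCoeff, Matrix.mul_smul]

/-- Expansion and coefficient vanishing for elements of `S_k`. -/
lemma Sk_expand {n : ℕ} (lam : Fin n → ℝ) (k : ℕ) (O : Op n) (hO : O ∈ Sk lam k) :
    O = ∑ α : Fin n → Fin 4, QCoeff lam O α • Qdual lam α ∧
      ∀ α : Fin n → Fin 4, k < (suppStr α).card → QCoeff lam O α = 0 := by
  refine Submodule.span_induction ?_ ?_ ?_ ?_ hO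
  · rintro Q ⟨β, hβ, rfl⟩
    constructor
    · rw [show (∑ α : Fin n → Fin 4, QCoeff lam (Qdual lam β) α • Qdual lam α)
          = ∑ α : Fin n → Fin 4, (if α = β then (1 : ℂ) else 0) • Qdual lam α by
        exact Finset.sum_congr rfl fun α _ => by rw [QCoeff_Qdual]]
      simp [ite_smul]
    · intro α hα
      rw [QCoeff_Qdual, if_neg]
      rintro rfl
      exact absurd hβ (not_le.mpr hα)
  · constructor
    · simp [QCoeff]
    · intro α _; simp [QCoeff]
  · rintro A B hA hB ⟨hA1, hA2⟩ ⟨hB1, hB2⟩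
    constructor
    · conv_lhs => rw [hA1, hB1]
      rw [← Finset.sum_add_distrib]
      exact Finset.sum_congr rfl fun α _ => by rw [QCoeff_add, add_smul]
    · intro α hα; rw [QCoeff_add, hA2 α hα, hB2 α hα, add_zero]
  · rintro c A hA ⟨hA1, hA2⟩
    constructor
    · conv_lhs => rw [hA1]
      rw [Finset.smul_sum]
      exact Finset.sum_congr rfl fun α _ => by rw [QCoeff_smul, smul_smul]
    · intro α hα; rw [QCoeff_smul, hA2 α hα, mul_zero]

/-- Per-qubit absolute row sums of the dual Wauli matrices. -/
lemma dualWauli_row_sum (l c : ℝ) (h0 : 0 ≤ l) (h1 : l ≤ c) (t : Fin 4) (a : Fin 2) :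
    ∑ b : Fin 2, ‖dualWauli l t a b‖ ≤ if t = 0 then 1 else 1 + c := by
  have hc : (0 : ℝ) ≤ c := h0.trans h1
  have e1 : ((1 : ℂ) - (l : ℂ)) = ((1 - l : ℝ) : ℂ) := by push_cast; ring
  have e2 : ((-1 : ℂ) - (l : ℂ)) = ((-1 - l : ℝ) : ℂ) := by push_cast; ring
  have n1 : ‖(1 : ℂ) - (l : ℂ)‖ ≤ 1 + c := by
    rw [e1, Complex.norm_real, Real.norm_eq_abs, abs_le]
    constructor <;> linarith
  have n2 : ‖(-1 : ℂ) - (l : ℂ)‖ ≤ 1 + c := by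
    rw [e2, Complex.norm_real, Real.norm_eq_abs, abs_le]
    constructor <;> linarith
  fin_cases t <;> fin_cases a <;>
    simp [dualWauli, PX, PY, PZ, Fin.sum_univ_two, Matrix.one_apply,
      Matrix.sub_apply, Matrix.smul_apply] <;>
    linarith

lemma dualWauli_norm_symm (l : ℝ) (t : Fin 4) (a b : Fin 2) :
    ‖dualWauli l t a b‖ = ‖dualWauli l t b a‖ := by
  fin_cases t <;> fin_cases a <;> fin_cases b <;>
    simp [dualWauli, PX, PY, PZ, Matrix.one_apply, Matrix.sub_apply, Matrix.smul_apply]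

/-- Row sums of `Qdual` are bounded by `(1+lmax)^|α|`. -/
lemma Qdual_row_sum {n : ℕ} (lam : Fin n → ℝ) (lmax : ℝ) (hmax : (0 : ℝ) ≤ lmax)
    (h : ∀ i, 0 ≤ lam i ∧ lam i ≤ lmax) (α : Fin n → Fin 4) (x : Idx n) :
    ∑ y : Idx n, ‖Qdual lam α x y‖ ≤ (1 + lmax) ^ (suppStr α).card := by
  have hb : (0 : ℝ) ≤ 1 + lmax := by linarith
  calc ∑ y : Idx n, ‖Qdual lam α x y‖
      = ∑ y : Idx n, ∏ i, ‖dualWauli (lam i) (α i) (x i) (y i)‖ := by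
        refine Finset.sum_congr rfl fun y _ => ?_
        simpa [Qdual] using norm_prod Finset.univ
          (fun i => dualWauli (lam i) (α i) (x i) (y i))
    _ = ∏ i, ∑ b : Fin 2, ‖dualWauli (lam i) (α i) (x i) b‖ :=
        (Fintype.prod_sum fun i b => ‖dualWauli (lam i) (α i) (x i) b‖).symm
    _ ≤ ∏ i, (if α i = 0 then (1 : ℝ) else 1 + lmax) := by
        refine Finset.prod_le_prod (fun i _ => Finset.sum_nonneg fun b _ => norm_nonneg _)
          (fun i _ => ?_)
        exact dualWauli_row_sum (lam i) lmax (h i).1 (h i).2 (α i) (x i)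
    _ = (1 + lmax) ^ (suppStr α).card := by
        rw [← Finset.prod_filter_mul_prod_filter_not Finset.univ (fun i => α i ≠ 0)
          (fun i => if α i = 0 then (1 : ℝ) else 1 + lmax)]
        have e1 : ∀ i ∈ Finset.univ.filter (fun i => α i ≠ 0),
            (if α i = 0 then (1 : ℝ) else 1 + lmax) = 1 + lmax := by
          intro i hi
          rw [if_neg (Finset.mem_filter.mp hi).2]
        have e2 : ∀ i ∈ Finset.univ.filter (fun i => ¬ α i ≠ 0),
            (if α i = 0 then (1 : ℝ) else 1 + lmax) = 1 := by
          intro i hi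
          rw [if_pos (not_not.mp (Finset.mem_filter.mp hi).2)]
        rw [Finset.prod_congr rfl e1, Finset.prod_congr rfl e2,
          Finset.prod_const, Finset.prod_const_one, mul_one]
        rfl

/-- Column sums of `Qdual` are bounded by `(1+lmax)^|α|`. -/
lemma Qdual_col_sum {n : ℕ} (lam : Fin n → ℝ) (lmax : ℝ) (hmax : (0 : ℝ) ≤ lmax)
    (h : ∀ i, 0 ≤ lam i ∧ lam i ≤ lmax) (α : Fin n → Fin 4) (y : Idx n) :
    ∑ x : Idx n, ‖Qdual lam α x y‖ ≤ (1 + lmax) ^ (suppStr α).card := by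
  have hsymm : ∀ x : Idx n, ‖Qdual lam α x y‖ = ‖Qdual lam α y x‖ := by
    intro x
    simp only [Qdual, Matrix.of_apply]
    rw [norm_prod, norm_prod]
    exact Finset.prod_congr rfl fun i _ => dualWauli_norm_symm (lam i) (α i) (x i) (y i)
  rw [Finset.sum_congr rfl fun x _ => hsymm x]
  exact Qdual_row_sum lam lmax hmax h α y

/-- Operator norm bound for the dual Wauli operators. -/
lemma opNorm_Qdual_le {n : ℕ} (lam : Fin n → ℝ) (lmax : ℝ) (hmax : (0 : ℝ) ≤ lmax)
    (h : ∀ i, 0 ≤ lam i ∧ lam i ≤ lmax) (α : Fin n → Fin 4) :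
    opNorm (Qdual lam α) ≤ (1 + lmax) ^ (suppStr α).card :=
  schur_opNorm_le _ _ (pow_nonneg (by linarith) _)
    (Qdual_row_sum lam lmax hmax h α) (Qdual_col_sum lam lmax hmax h α)

/-- for operators in `S_k`, the operator norm is controlled by
the `Q1` norm, `‖O‖_∞ ≤ (1+λ)^k ‖O‖_{Q1}` where `λ = max_i λ_i`. -/
theorem opNorm_le_pow_mul_Q1Norm {n : ℕ} (hn : 0 < n) (lam : Fin n → ℝ)
    (hlam : ∀ i, 0 ≤ lam i ∧ lam i < 1)
    (lmax : ℝ) (hmax : IsGreatest (Set.range lam) lmax)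
    (k : ℕ) (O : Op n) (hO : O ∈ Sk lam k) :
    opNorm O ≤ (1 + lmax) ^ k * Q1Norm lam O := by
  obtain ⟨hexp, hvan⟩ := Sk_expand lam k O hO
  obtain ⟨⟨i0, hi0⟩, hub⟩ := hmax
  have hm0 : (0 : ℝ) ≤ lmax := hi0 ▸ (hlam i0).1
  have h' : ∀ i, 0 ≤ lam i ∧ lam i ≤ lmax := fun i => ⟨(hlam i).1, hub ⟨i, rfl⟩⟩
  calc opNorm O
      = opNorm (∑ α : Fin n → Fin 4, QCoeff lam O α • Qdual lam α) := by rw [← hexp]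
    _ ≤ ∑ α : Fin n → Fin 4, ‖QCoeff lam O α‖ * opNorm (Qdual lam α) := by
        rw [opNorm, map_sum]
        refine (norm_sum_le _ _).trans (le_of_eq (Finset.sum_congr rfl fun α _ => ?_))
        rw [_root_.map_smul]
        exact norm_smul (QCoeff lam O α) (toEuclideanCLM (𝕜 := ℂ) (Qdual lam α))
    _ ≤ ∑ α : Fin n → Fin 4, ‖QCoeff lam O α‖ * (1 + lmax) ^ k := by
        refine Finset.sum_le_sum fun α _ => ?_
        by_cases hc : QCoeff lam O α = 0
        · have h0 : ‖QCoeff lam O α‖ = 0 := by rw [hc, norm_zero]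
          rw [h0, zero_mul, zero_mul]
        · have hcard : (suppStr α).card ≤ k := by
            by_contra hlt
            exact hc (hvan α (not_le.mp hlt))
          refine mul_le_mul_of_nonneg_left ?_ (norm_nonneg _)
          exact (opNorm_Qdual_le lam lmax hm0 h' α).trans
            (pow_le_pow_right₀ (by linarith) hcard)
    _ = (1 + lmax) ^ k * Q1Norm lam O := by
        rw [Q1Norm, Finset.mul_sum]
        exact Finset.sum_congr rfl fun α _ => mul_comm _ _

end

end SSP
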